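/- Let n ≥ 2 and 1 ≤ p ≤ n be integers, and let r ≥ 1, s ≥ 0, 0 ≤ i ≤ s be integers. Then (ns+p)(nr-p) · C(-i - p/n, s-i) · C(i + p/n, r+i) = (-1)^{r+s+i-1} · p·(ni+p) · (r!·s! / ((r+i)!·(s-i)!)) · C(s + p/n, s) · C(r - p/n, r). -/

import Mathlib

/-- The generalized binomial coefficient C(x, k) = x(x-1)⋯(x-k+1)/k! for x ∈ ℚ. -/
def gchoose (x : ℚ) (k : ℕ) : ℚ :=
  (∏ i ∈ Finset.range k, (x - i)) / (Nat.factorial k)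


lemma LA (x : ℚ) (i : ℕ) : ∀ d : ℕ, ∏ j ∈ Finset.range d, (-(i:ℚ) - x - j)
    = (-1)^d * ∏ j ∈ Finset.range d, (x + i + j)
  | 0 => by simp
  | (d+1) => by
      rw [Finset.prod_range_succ, Finset.prod_range_succ, LA x i d]
      push_cast; ring

lemma LC (x : ℚ) : ∀ s : ℕ, ∏ j ∈ Finset.range s, ((s:ℚ) + x - j)
    = ∏ j ∈ Finset.range s, (x + 1 + j)
  | 0 => by simp
  | (s+1) => by
      rw [Finset.prod_range_succ', Finset.prod_range_succ,
        Finset.prod_congr rfl (fun j _ => by push_cast; ring :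
          ∀ j ∈ Finset.range s, (((s+1:ℕ):ℚ) + x - ((j:ℕ)+1:ℕ)) = (s:ℚ) + x - j),
        LC x s]
      push_cast; ring

lemma LD (x : ℚ) : ∀ r : ℕ, ∏ j ∈ Finset.range r, ((r:ℚ) - x - j)
    = (-1)^r * ∏ j ∈ Finset.range r, (x - 1 - j)
  | 0 => by simp
  | (r+1) => by
      rw [Finset.prod_range_succ', Finset.prod_range_succ,
        Finset.prod_congr rfl (fun j _ => by push_cast; ring :
          ∀ j ∈ Finset.range r, (((r+1:ℕ):ℚ) - x - ((j:ℕ)+1:ℕ)) = (r:ℚ) - x - j),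
        LD x r]
      push_cast; ring

lemma LB1 (x : ℚ) (k : ℕ) : ∀ i : ℕ, ∏ j ∈ Finset.range (i+k), ((i:ℚ) + x - j)
    = (∏ j ∈ Finset.range i, (x + 1 + j)) * ∏ j ∈ Finset.range k, (x - j)
  | 0 => by simp
  | (i+1) => by
      rw [show i+1+k = (i+k)+1 from by omega, Finset.prod_range_succ',
        Finset.prod_congr rfl (fun j _ => by push_cast; ring :
          ∀ j ∈ Finset.range (i+k), (((i+1:ℕ):ℚ) + x - ((j:ℕ)+1:ℕ)) = (i:ℚ) + x - j),
        LB1 x k i, Finset.prod_range_succ]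
      push_cast; ring

lemma LB2 (x : ℚ) (k : ℕ) : ∏ j ∈ Finset.range (k+1), (x - j)
    = x * ∏ j ∈ Finset.range k, (x - 1 - j) := by
  rw [Finset.prod_range_succ',
    Finset.prod_congr rfl (fun j _ => by push_cast; ring :
      ∀ j ∈ Finset.range k, (x - ((j:ℕ)+1:ℕ)) = x - 1 - j)]
  push_cast; ring

lemma LE5 (x : ℚ) (i : ℕ) : ∀ d : ℕ,
    (∏ j ∈ Finset.range d, (x + i + j)) * (∏ j ∈ Finset.range i, (x + 1 + j)) * (x + i + d)
      = (x + i) * ∏ j ∈ Finset.range (i+d), (x + 1 + j)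
  | 0 => by simp; ring
  | (d+1) => by
      rw [Finset.prod_range_succ, show i+(d+1) = (i+d)+1 from by omega,
        Finset.prod_range_succ]
      have := LE5 x i d
      push_cast at this ⊢
      linear_combination (x + (i:ℚ) + d + 1) * this

/-- Product identity from the proof of Proposition 8.1 of the paper. -/
theorem prop_8_1_product_identity (n p r s i : ℕ) (hn : 2 ≤ n) (hp1 : 1 ≤ p) (hpn : p ≤ n)
    (hr : 1 ≤ r) (hi : i ≤ s) :
    ((n : ℚ) * s + p) * ((n : ℚ) * r - p)
        * gchoose (-(i : ℚ) - (p : ℚ) / (n : ℚ)) (s - i)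
        * gchoose ((i : ℚ) + (p : ℚ) / (n : ℚ)) (r + i)
      = (-1 : ℚ) ^ (r + s + i - 1) * (p : ℚ) * ((n : ℚ) * i + p)
          * ((r.factorial : ℚ) * (s.factorial : ℚ)
              / (((r + i).factorial : ℚ) * ((s - i).factorial : ℚ)))
          * gchoose ((s : ℚ) + (p : ℚ) / (n : ℚ)) s
          * gchoose ((r : ℚ) - (p : ℚ) / (n : ℚ)) r := by
  obtain ⟨d, rfl⟩ := Nat.exists_eq_add_of_le hi
  obtain ⟨r', rfl⟩ := Nat.exists_eq_add_of_le hr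
  have hn0 : (n:ℚ) ≠ 0 := by positivity
  have hd : (0:ℚ) < (p:ℚ)/(n:ℚ) := by
    apply div_pos <;> · norm_num; omega
  obtain ⟨x, hxeq, hx0⟩ : ∃ x : ℚ, (p:ℚ)/(n:ℚ) = x ∧ 0 < x := ⟨_, rfl, hd⟩
  have hp' : (p:ℚ) = (n:ℚ) * x := by rw [← hxeq]; field_simp
  have hxi : x + (i:ℚ) ≠ 0 := by positivity
  rw [hxeq]
  unfold gchoose
  rw [show 1 + r' = r' + 1 from by omega]
  rw [show i + d - i = d from by omega, show r' + 1 + i = i + (r'+1) from by omega,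
    LA, LB1, LB2, LC, LD]
  have hS : ∏ j ∈ Finset.range (i+d), (x + 1 + j)
      = (∏ j ∈ Finset.range d, (x + i + j)) * (∏ j ∈ Finset.range i, (x + 1 + j))
          * (x + i + d) / (x + i) := by
    rw [eq_div_iff hxi]
    linear_combination -LE5 x i d
  rw [hS, Finset.prod_range_succ,
    show r' + 1 + (i + d) + i - 1 = d + 2*i + r' from by omega, hp',
    show (-1:ℚ)^(d + 2*i + r') = (-1)^d * (-1)^r' from by
      rw [pow_add, pow_add, pow_mul]; norm_num]
  have f1 : ((i+(r'+1)).factorial : ℚ) ≠ 0 := by positivity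
  have f2 : ((d).factorial : ℚ) ≠ 0 := by positivity
  have f3 : ((r'+1).factorial : ℚ) ≠ 0 := by positivity
  have f4 : ((i+d).factorial : ℚ) ≠ 0 := by positivity
  rw [show ((-1:ℚ))^(r'+1) = -(-1:ℚ)^r' from by rw [pow_succ]; ring]
  rcases Nat.even_or_odd r' with h2 | h2 <;> rcases Nat.even_or_odd d with h1 | h1 <;>
    simp only [h1.neg_one_pow, h2.neg_one_pow] <;> field_simp <;> push_cast <;> ring
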